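/- arXiv:math-ph/0409061 — 3 statements merged into one kernel-verified Lean document; each statement's English description precedes it below -/
import Mathlib

section
/- If ρ² ≥ 1 then the function V(σ) = σ²/(2ρ²) - log cosh(σ/ρ²) on ℝ is convex and has a unique global minimum at σ = 0. -/
open Real

/-- Strict version of `Real.cosh_le_exp_half_sq` for nonzero `x`. -/
lemma cosh_lt_exp_half_sq' {x : ℝ} (hx : x ≠ 0) : Real.cosh x < Real.exp (x ^ 2 / 2) := by
  rw [Real.cosh_eq_tsum, Real.exp_eq_exp_ℝ, NormedSpace.exp_eq_tsum ℝ]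
  refine Summable.tsum_lt_tsum_of_nonneg (i := 2) (fun n => ?_) (fun n => ?_) ?_
    (NormedSpace.expSeries_summable' (x ^ 2 / 2))
  · rw [pow_mul]; positivity
  · simp only [div_pow, pow_mul, smul_eq_mul, inv_mul_eq_div, div_div]
    gcongr
    norm_cast
    exact Nat.two_pow_mul_factorial_le_factorial_two_mul _
  · have hx4 : 0 < x ^ 4 := by positivity
    simp only [smul_eq_mul, div_pow]
    norm_num [Nat.factorial]
    nlinarith

lemma log_cosh_lt_half_sq {x : ℝ} (hx : x ≠ 0) : Real.log (Real.cosh x) < x ^ 2 / 2 := by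
  have := Real.log_lt_log (Real.cosh_pos x) (cosh_lt_exp_half_sq' hx)
  rwa [Real.log_exp] at this

lemma log_cosh_le_half_sq (x : ℝ) : Real.log (Real.cosh x) ≤ x ^ 2 / 2 := by
  have := Real.log_le_log (Real.cosh_pos x) (Real.cosh_le_exp_half_sq x)
  rwa [Real.log_exp] at this

lemma hasDerivAt_tanh (x : ℝ) : HasDerivAt Real.tanh (1 / Real.cosh x ^ 2) x := by
  have h := (Real.hasDerivAt_sinh x).div (Real.hasDerivAt_cosh x) (Real.cosh_pos x).ne'
  have hfun : (fun y => Real.sinh y / Real.cosh y) = Real.tanh := by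
    funext y; rw [Real.tanh_eq_sinh_div_cosh]
  rw [show Real.sinh / Real.cosh = Real.tanh from hfun] at h
  refine h.congr_deriv ?_
  have := Real.cosh_sq_sub_sinh_sq x
  ring_nf
  nlinarith [this]

/-- If `ρ² ≥ 1` then the double-well potential `V σ = σ²/(2ρ²) - log cosh(σ/ρ²)`
is convex and has a unique global minimum at `σ = 0`. -/
theorem doubleWell_convex_of_one_le (ρ : ℝ) (hρ : 0 < ρ) (h1 : 1 ≤ ρ ^ 2) :
    let V : ℝ → ℝ := fun σ => σ ^ 2 / (2 * ρ ^ 2) - Real.log (Real.cosh (σ / ρ ^ 2))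
    ConvexOn ℝ Set.univ V ∧ (∀ σ : ℝ, V 0 ≤ V σ) ∧ (∀ σ : ℝ, V σ = V 0 → σ = 0) := by
  intro V
  have hρ2 : (0:ℝ) < ρ ^ 2 := by positivity
  have hρ4 : (0:ℝ) < ρ ^ 4 := by positivity
  -- V(0) = 0
  have hV0 : V 0 = 0 := by simp [V]
  -- derivative of V
  have hderiv : ∀ σ : ℝ, HasDerivAt V (σ / ρ ^ 2 - Real.tanh (σ / ρ ^ 2) * (ρ ^ 2)⁻¹) σ := by
    intro σ
    have h1' : HasDerivAt (fun σ : ℝ => σ ^ 2 / (2 * ρ ^ 2)) (σ / ρ ^ 2) σ := by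
      have := (hasDerivAt_pow 2 σ).div_const (2 * ρ ^ 2)
      refine this.congr_deriv ?_
      field_simp
      ring
    have hin : HasDerivAt (fun σ : ℝ => σ / ρ ^ 2) ((ρ ^ 2)⁻¹) σ := by
      simpa [div_eq_mul_inv] using (hasDerivAt_id σ).mul_const ((ρ ^ 2)⁻¹)
    have hcosh : HasDerivAt (fun σ : ℝ => Real.cosh (σ / ρ ^ 2))
        (Real.sinh (σ / ρ ^ 2) * (ρ ^ 2)⁻¹) σ := (Real.hasDerivAt_cosh _).comp σ hin
    have hlog : HasDerivAt (fun σ : ℝ => Real.log (Real.cosh (σ / ρ ^ 2)))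
        ((Real.cosh (σ / ρ ^ 2))⁻¹ * (Real.sinh (σ / ρ ^ 2) * (ρ ^ 2)⁻¹)) σ :=
      (Real.hasDerivAt_log (Real.cosh_pos (σ / ρ ^ 2)).ne').comp (h₂ := Real.log) σ hcosh
    have := h1'.sub hlog
    refine this.congr_deriv ?_
    rw [Real.tanh_eq_sinh_div_cosh]
    field_simp
  have hderivV : deriv V = fun σ => σ / ρ ^ 2 - Real.tanh (σ / ρ ^ 2) * (ρ ^ 2)⁻¹ := by
    funext σ; exact (hderiv σ).deriv
  -- second derivative
  have hderiv2 : ∀ σ : ℝ, HasDerivAt (deriv V)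
      ((ρ ^ 2)⁻¹ - 1 / Real.cosh (σ / ρ ^ 2) ^ 2 * (ρ ^ 2)⁻¹ * (ρ ^ 2)⁻¹) σ := by
    intro σ
    rw [hderivV]
    have hin : HasDerivAt (fun σ : ℝ => σ / ρ ^ 2) ((ρ ^ 2)⁻¹) σ := by
      simpa [div_eq_mul_inv] using (hasDerivAt_id σ).mul_const ((ρ ^ 2)⁻¹)
    have htanh : HasDerivAt (fun σ : ℝ => Real.tanh (σ / ρ ^ 2))
        (1 / Real.cosh (σ / ρ ^ 2) ^ 2 * (ρ ^ 2)⁻¹) σ := (hasDerivAt_tanh _).comp σ hin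
    exact hin.sub (htanh.mul_const _)
  -- convexity
  have hconv : ConvexOn ℝ Set.univ V := by
    apply convexOn_univ_of_deriv2_nonneg
    · exact fun σ => (hderiv σ).differentiableAt
    · exact fun σ => (hderiv2 σ).differentiableAt
    · intro σ
      have : deriv (deriv V) σ =
          (ρ ^ 2)⁻¹ - 1 / Real.cosh (σ / ρ ^ 2) ^ 2 * (ρ ^ 2)⁻¹ * (ρ ^ 2)⁻¹ :=
        (hderiv2 σ).deriv
      rw [Function.iterate_succ, Function.iterate_one, Function.comp_apply, this]
      have hc1 : (1:ℝ) ≤ Real.cosh (σ / ρ ^ 2) := Real.one_le_cosh _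
      have hc2 : (1:ℝ) ≤ Real.cosh (σ / ρ ^ 2) ^ 2 := by nlinarith
      have hmul : (ρ ^ 2)⁻¹ * ρ ^ 2 = 1 := inv_mul_cancel₀ hρ2.ne'
      have hinv : (ρ ^ 2)⁻¹ ≤ 1 := by nlinarith
      have hpos : (0:ℝ) < (ρ ^ 2)⁻¹ := by positivity
      have h3 : 1 / Real.cosh (σ / ρ ^ 2) ^ 2 ≤ 1 := by
        rw [div_le_one (by positivity)]; exact hc2
      have key : 1 / Real.cosh (σ / ρ ^ 2) ^ 2 * (ρ ^ 2)⁻¹ * (ρ ^ 2)⁻¹ ≤ (ρ ^ 2)⁻¹ :=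
        calc 1 / Real.cosh (σ / ρ ^ 2) ^ 2 * (ρ ^ 2)⁻¹ * (ρ ^ 2)⁻¹
            ≤ 1 * (ρ ^ 2)⁻¹ * (ρ ^ 2)⁻¹ := by gcongr
          _ = (ρ ^ 2)⁻¹ * (ρ ^ 2)⁻¹ := by ring
          _ ≤ 1 * (ρ ^ 2)⁻¹ := by gcongr
          _ = (ρ ^ 2)⁻¹ := by ring
      linarith
  -- lower bound
  have hmin : ∀ σ : ℝ, V 0 ≤ V σ := by
    intro σ
    rw [hV0]
    have h2 : Real.log (Real.cosh (σ / ρ ^ 2)) ≤ (σ / ρ ^ 2) ^ 2 / 2 :=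
      log_cosh_le_half_sq _
    have h3 : (σ / ρ ^ 2) ^ 2 / 2 ≤ σ ^ 2 / (2 * ρ ^ 2) := by
      rw [div_pow, div_div, div_le_div_iff₀ (by positivity) (by positivity)]
      nlinarith [mul_nonneg (mul_nonneg hρ2.le (sq_nonneg σ)) (sub_nonneg.mpr h1)]
    simp only [V]
    linarith
  refine ⟨hconv, hmin, ?_⟩
  intro σ hσ
  by_contra hne
  have hx : σ / ρ ^ 2 ≠ 0 := by
    simp [div_eq_zero_iff, hne, hρ2.ne']
  have h2 : Real.log (Real.cosh (σ / ρ ^ 2)) < (σ / ρ ^ 2) ^ 2 / 2 :=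
    log_cosh_lt_half_sq hx
  have h3 : (σ / ρ ^ 2) ^ 2 / 2 ≤ σ ^ 2 / (2 * ρ ^ 2) := by
    rw [div_pow, div_div, div_le_div_iff₀ (by positivity) (by positivity)]
    nlinarith [mul_nonneg (mul_nonneg hρ2.le (sq_nonneg σ)) (sub_nonneg.mpr h1)]
  have : V 0 < V σ := by
    rw [hV0]; simp only [V]; linarith
  rw [hσ] at this
  exact lt_irrefl _ this
end

section
/- If 0 < ρ² < 1 then V(σ) = σ²/(2ρ²) - log cosh(σ/ρ²) has exactly two global minimizers ±m, where m > 0 is the largest solution of m = tanh(m/ρ²); in particular V''(0) < 0, so 0 is a strict local maximum. -/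
open Real Filter Set Topology

lemma myTanh_lt_one (x : ℝ) : Real.tanh x < 1 := by
  rw [Real.tanh_eq_sinh_div_cosh, div_lt_one (Real.cosh_pos x)]
  exact Real.sinh_lt_cosh x

lemma myNeg_one_lt_tanh (x : ℝ) : -1 < Real.tanh x := by
  have h := Real.sinh_lt_cosh (-x)
  rw [Real.sinh_neg, Real.cosh_neg] at h
  rw [Real.tanh_eq_sinh_div_cosh, lt_div_iff₀ (Real.cosh_pos x)]
  linarith

lemma myTanh_pos {x : ℝ} (hx : 0 < x) : 0 < Real.tanh x := by
  rw [Real.tanh_eq_sinh_div_cosh]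
  exact div_pos (Real.sinh_pos_iff.2 hx) (Real.cosh_pos x)

lemma myHasDerivAt_tanh (x : ℝ) : HasDerivAt Real.tanh (1 - Real.tanh x ^ 2) x := by
  have h := (Real.hasDerivAt_sinh x).div (Real.hasDerivAt_cosh x) (Real.cosh_pos x).ne'
  have he : Real.tanh = fun y => Real.sinh y / Real.cosh y :=
    funext fun y => Real.tanh_eq_sinh_div_cosh y
  rw [he]
  refine h.congr_deriv ?_
  have hc := Real.cosh_sq x
  have hcp := (Real.cosh_pos x).ne'
  beta_reduce
  field_simp

/-- If `0 < ρ² < 1` then the double-well potential has exactly two global minimizers `±m`,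
with `m > 0` the largest solution of `m = tanh(m/ρ²)`, and `V''(0) < 0`. -/
theorem doubleWell_two_minima (ρ : ℝ) (hρ : 0 < ρ) (h1 : ρ ^ 2 < 1) :
    let V : ℝ → ℝ := fun σ => σ ^ 2 / (2 * ρ ^ 2) - Real.log (Real.cosh (σ / ρ ^ 2))
    ∃ m : ℝ, 0 < m ∧ m = Real.tanh (m / ρ ^ 2) ∧
      (∀ m' : ℝ, m' = Real.tanh (m' / ρ ^ 2) → m' ≤ m) ∧
      {σ : ℝ | ∀ σ' : ℝ, V σ ≤ V σ'} = {m, -m} ∧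
      deriv (deriv V) 0 < 0 := by
  intro V
  have hr : (0:ℝ) < ρ ^ 2 := by positivity
  set a : ℝ := (ρ ^ 2)⁻¹ with ha_def
  have ha0 : 0 < a := inv_pos.2 hr
  have ha : 1 < a := (one_lt_inv₀ hr).2 h1
  have hdiv : ∀ x : ℝ, x / ρ ^ 2 = x * a := fun x => div_eq_mul_inv x (ρ ^ 2)
  set g : ℝ → ℝ := fun σ => σ - Real.tanh (σ * a) with hg_def
  -- derivative facts for g
  have hT : ∀ x : ℝ, HasDerivAt (fun σ : ℝ => Real.tanh (σ * a))
      ((1 - Real.tanh (x * a) ^ 2) * a) x := fun x =>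
    by have := (myHasDerivAt_tanh (x * a)).comp x (hasDerivAt_mul_const a); exact this
  have hg : ∀ x : ℝ, HasDerivAt g (1 - (1 - Real.tanh (x * a) ^ 2) * a) x := fun x =>
    (hasDerivAt_id x).sub (hT x)
  have hgcont : Continuous g := by
    rw [continuous_iff_continuousAt]
    exact fun x => (hg x).differentiableAt.continuousAt
  set g' : ℝ → ℝ := fun x => 1 - (1 - Real.tanh (x * a) ^ 2) * a with hg'_def
  have hderivg : deriv g = g' := funext fun x => (hg x).deriv
  have hg' : ∀ x : ℝ, HasDerivAt g'
      (2 * Real.tanh (x * a) * ((1 - Real.tanh (x * a) ^ 2) * a) * a) x := by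
    intro x
    have h2 := (hasDerivAt_const x (1 - a)).add (((hT x).pow 2).mul_const a)
    have he : g' = fun σ : ℝ => 1 - a + Real.tanh (σ * a) ^ 2 * a := by
      funext σ; simp only [hg'_def]; ring
    rw [he]
    exact h2.congr_deriv (by norm_num)
  -- convexity of g on [0, ∞)
  have hconv : StrictConvexOn ℝ (Set.Ici (0:ℝ)) g := by
    apply strictConvexOn_of_deriv2_pos (convex_Ici 0) hgcont.continuousOn
    intro x hx
    rw [interior_Ici] at hx
    have hxa : 0 < x * a := mul_pos hx ha0
    have ht1 : Real.tanh (x * a) < 1 := myTanh_lt_one _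
    have ht0 : 0 < Real.tanh (x * a) := myTanh_pos hxa
    have : deriv^[2] g x = 2 * Real.tanh (x * a) * ((1 - Real.tanh (x * a) ^ 2) * a) * a := by
      show deriv (deriv g) x = _
      rw [hderivg]
      exact (hg' x).deriv
    rw [this]
    have h2 : Real.tanh (x * a) ^ 2 < 1 := by nlinarith [myNeg_one_lt_tanh (x * a)]
    exact mul_pos (mul_pos (mul_pos two_pos ht0) (mul_pos (sub_pos.2 h2) ha0)) ha0
  have hg0 : g 0 = 0 := by simp [hg_def]
  -- find x₀ > 0 with g x₀ < 0
  have hslope : Tendsto (slope g 0) (𝓝[≠] (0:ℝ)) (𝓝 (1 - (1 - Real.tanh (0 * a) ^ 2) * a)) :=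
    hasDerivAt_iff_tendsto_slope.1 (hg 0)
  have hlim : 1 - (1 - Real.tanh (0 * a) ^ 2) * a < 0 := by
    simp [Real.tanh_zero]; linarith
  have hev : ∀ᶠ x in 𝓝[≠] (0:ℝ), slope g 0 x < 0 := hslope.eventually_lt_const hlim
  have hle : 𝓝[>] (0:ℝ) ≤ 𝓝[≠] (0:ℝ) :=
    nhdsWithin_mono 0 (fun x hx => ne_of_gt hx)
  have hev2 : ∀ᶠ x in 𝓝[>] (0:ℝ), slope g 0 x < 0 ∧ x ∈ Set.Ioo (0:ℝ) 1 :=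
    (hev.filter_mono hle).and (Ioo_mem_nhdsGT_of_mem ⟨le_refl 0, zero_lt_one⟩)
  obtain ⟨x₀, hsl, hx₀⟩ := hev2.exists
  have hgx₀ : g x₀ < 0 := by
    have : slope g 0 x₀ = g x₀ / x₀ := by
      simp [slope_def_field, hg0]
    rw [this] at hsl
    exact (div_neg_iff.1 hsl).elim (fun h => absurd hx₀.1 (not_lt.2 h.2.le))
      (fun h => h.1)
  have hg1 : 0 < g 1 := by
    have : Real.tanh (1 * a) < 1 := myTanh_lt_one _
    simp only [hg_def]
    linarith
  -- IVT
  obtain ⟨m, hmIcc, hm0⟩ : ∃ m ∈ Set.Icc x₀ 1, g m = 0 := by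
    have hsub := intermediate_value_Icc hx₀.2.le hgcont.continuousOn
    have h0mem : (0:ℝ) ∈ Set.Icc (g x₀) (g 1) := ⟨hgx₀.le, hg1.le⟩
    obtain ⟨m, hm, hgm⟩ := hsub h0mem
    exact ⟨m, hm, hgm⟩
  have hmpos : 0 < m := lt_of_lt_of_le hx₀.1 hmIcc.1
  -- sign of g
  have hneg : ∀ x : ℝ, 0 < x → x < m → g x < 0 := by
    intro x hx hxm
    have ht : x / m ∈ Set.Ioo (0:ℝ) 1 := ⟨div_pos hx hmpos, (div_lt_one hmpos).2 hxm⟩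
    have hcomb := hconv.2 (Set.self_mem_Ici) (Set.mem_Ici.2 hmpos.le) (ne_of_lt hmpos)
      (sub_pos.2 ht.2) ht.1 (by ring)
    have hx' : (1 - x / m) • (0:ℝ) + (x / m) • m = x := by
      simp only [smul_eq_mul, mul_zero, zero_add]
      field_simp
    rw [hx', hg0, hm0] at hcomb
    simpa using hcomb
  have hpos : ∀ x : ℝ, m < x → 0 < g x := by
    intro x hxm
    have hx : 0 < x := hmpos.trans hxm
    have ht : m / x ∈ Set.Ioo (0:ℝ) 1 := ⟨div_pos hmpos hx, (div_lt_one hx).2 hxm⟩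
    have hcomb := hconv.2 (Set.self_mem_Ici) (Set.mem_Ici.2 hx.le) (ne_of_lt hx)
      (sub_pos.2 ht.2) ht.1 (by ring)
    have hx' : (1 - m / x) • (0:ℝ) + (m / x) • x = m := by
      simp only [smul_eq_mul, mul_zero, zero_add]
      field_simp
    rw [hx', hg0, hm0] at hcomb
    simp only [smul_eq_mul, mul_zero, zero_add] at hcomb
    by_contra hcon
    push_neg at hcon
    have := mul_nonpos_of_nonneg_of_nonpos ht.1.le hcon
    linarith
  -- fixed point and maximality
  have hmfix : m = Real.tanh (m / ρ ^ 2) := by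
    rw [hdiv]
    have := hm0
    simp only [hg_def] at this
    linarith
  have hmax : ∀ m' : ℝ, m' = Real.tanh (m' / ρ ^ 2) → m' ≤ m := by
    intro m' hm'
    by_contra hc
    push_neg at hc
    have : 0 < g m' := hpos m' hc
    have : g m' = 0 := by
      simp only [hg_def]
      rw [hdiv] at hm'
      linarith
    linarith
  -- derivative of V
  have hVd : ∀ x : ℝ, HasDerivAt V (a * g x) x := by
    intro x
    have h1' : HasDerivAt (fun σ : ℝ => σ ^ 2 / (2 * ρ ^ 2)) ((2 * x ^ 1) / (2 * ρ ^ 2)) x :=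
      (hasDerivAt_pow 2 x).div_const (2 * ρ ^ 2)
    have hu : HasDerivAt (fun σ : ℝ => σ / ρ ^ 2) (1 / ρ ^ 2) x :=
      (hasDerivAt_id x).div_const (ρ ^ 2)
    have hc : HasDerivAt (fun σ : ℝ => Real.cosh (σ / ρ ^ 2))
        (Real.sinh (x / ρ ^ 2) * (1 / ρ ^ 2)) x :=
      by have := (Real.hasDerivAt_cosh (x / ρ ^ 2)).comp x hu; exact this
    have hl : HasDerivAt (fun σ : ℝ => Real.log (Real.cosh (σ / ρ ^ 2)))
        (Real.sinh (x / ρ ^ 2) * (1 / ρ ^ 2) / Real.cosh (x / ρ ^ 2)) x :=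
      hc.log (Real.cosh_pos _).ne'
    have hV' : HasDerivAt V
        ((2 * x ^ 1) / (2 * ρ ^ 2) - Real.sinh (x / ρ ^ 2) * (1 / ρ ^ 2) / Real.cosh (x / ρ ^ 2)) x :=
      h1'.sub hl
    have heq : (2 * x ^ 1) / (2 * ρ ^ 2) - Real.sinh (x / ρ ^ 2) * (1 / ρ ^ 2) / Real.cosh (x / ρ ^ 2)
        = a * g x := by
      simp only [hg_def]
      rw [← hdiv, Real.tanh_eq_sinh_div_cosh]
      have hcp := (Real.cosh_pos (x / ρ ^ 2)).ne'
      have hρ' : ρ ≠ 0 := hρ.ne'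
      rw [ha_def]
      field_simp
    rwa [heq] at hV'
  have hVcont : Continuous V := by
    rw [continuous_iff_continuousAt]
    exact fun x => (hVd x).differentiableAt.continuousAt
  have hderivV : deriv V = fun x => a * g x := funext fun x => (hVd x).deriv
  -- monotonicity of V
  have hVanti : StrictAntiOn V (Set.Icc 0 m) := by
    apply strictAntiOn_of_deriv_neg (convex_Icc 0 m) hVcont.continuousOn
    intro x hx
    rw [interior_Icc] at hx
    rw [hderivV]
    exact mul_neg_of_pos_of_neg ha0 (hneg x hx.1 hx.2)
  have hVmono : StrictMonoOn V (Set.Ici m) := by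
    apply strictMonoOn_of_deriv_pos (convex_Ici m) hVcont.continuousOn
    intro x hx
    rw [interior_Ici] at hx
    rw [hderivV]
    exact mul_pos ha0 (hpos x hx)
  have hVeven : ∀ x : ℝ, V (-x) = V x := by
    intro x
    show (-x) ^ 2 / (2 * ρ ^ 2) - Real.log (Real.cosh (-x / ρ ^ 2))
      = x ^ 2 / (2 * ρ ^ 2) - Real.log (Real.cosh (x / ρ ^ 2))
    rw [neg_div, Real.cosh_neg, neg_sq]
  have hmin : ∀ σ : ℝ, 0 ≤ σ → V m ≤ V σ ∧ (V σ ≤ V m → σ = m) := by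
    intro σ hσ
    rcases lt_trichotomy σ m with h | h | h
    · have hlt : V m < V σ := hVanti ⟨hσ, h.le⟩ ⟨hmpos.le, le_refl m⟩ h
      exact ⟨hlt.le, fun hc => absurd hc (not_le.2 hlt)⟩
    · subst h; exact ⟨le_refl _, fun _ => rfl⟩
    · have hlt : V m < V σ := hVmono (Set.self_mem_Ici) (Set.mem_Ici.2 h.le) h
      exact ⟨hlt.le, fun hc => absurd hc (not_le.2 hlt)⟩
  have hkey : ∀ σ : ℝ, V m ≤ V σ ∧ (V σ ≤ V m → σ = m ∨ σ = -m) := by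
    intro σ
    rcases le_or_gt 0 σ with h | h
    · obtain ⟨h1', h2'⟩ := hmin σ h
      exact ⟨h1', fun hc => Or.inl (h2' hc)⟩
    · obtain ⟨h1', h2'⟩ := hmin (-σ) (by linarith)
      rw [hVeven σ] at h1' h2'
      exact ⟨h1', fun hc => Or.inr (by linarith [h2' hc])⟩
  -- the set of minimizers
  have hset : {σ : ℝ | ∀ σ' : ℝ, V σ ≤ V σ'} = {m, -m} := by
    ext σ
    simp only [Set.mem_setOf_eq, Set.mem_insert_iff, Set.mem_singleton_iff]
    constructor
    · intro h
      exact (hkey σ).2 (h m)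
    · rintro (rfl | rfl)
      · intro σ'; exact (hkey σ').1
      · intro σ'; rw [hVeven m]; exact (hkey σ').1
  -- second derivative at 0
  have hd2 : HasDerivAt (deriv V) (a * (1 - (1 - Real.tanh (0 * a) ^ 2) * a)) 0 := by
    rw [hderivV]
    exact (hg 0).const_mul a
  have hd2v : deriv (deriv V) 0 < 0 := by
    rw [hd2.deriv]
    have : Real.tanh (0 * a) = 0 := by rw [zero_mul, Real.tanh_zero]
    rw [this]
    nlinarith
  exact ⟨m, hmpos, hmfix, hmax, hset, hd2v⟩
end

section
/- Let 0 ≤ λ < 1/(2d), a₀ > 0 with λ(1+a₀)2d < 1, and let C be a matrix with 0 ≤ C_{x,y} ≤ a₀(λ∂/(I-λ∂))_{x,y} entrywise. Then D = Σ_{n≥0} Cⁿ converges entrywise and satisfies D_{x,y} ≤ ((I-λ∂)(I - λ(1+a₀)∂)⁻¹)_{x,y} for all x,y. -/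
/-- The lattice `ℤ^d`. -/
abbrev Zd (d : ℕ) := Fin d → ℤ

/-- Nearest-neighbor adjacency matrix of `ℤ^d`. -/
noncomputable def adj {d : ℕ} (x y : Zd d) : ℝ :=
  if (∑ i, (x i - y i).natAbs) = 1 then 1 else 0

/-- Matrix powers of the adjacency matrix (entrywise, via `tsum`). -/
noncomputable def adjPow (d : ℕ) : ℕ → Zd d → Zd d → ℝ
  | 0 => fun x y => if x = y then 1 else 0
  | n + 1 => fun x y => ∑' z : Zd d, adj x z * adjPow d n z y

/-- neighbors -/
noncomputable def nbr {d : ℕ} (x : Zd d) : Finset (Zd d) :=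
  (Finset.univ : Finset (Fin d × Bool)).image
    (fun p => Function.update x p.1 (x p.1 + (if p.2 then 1 else -1)))

lemma mem_nbr {d : ℕ} {x z : Zd d} : z ∈ nbr x ↔ (∑ i, (x i - z i).natAbs) = 1 := by
  constructor
  · intro h
    simp only [nbr, Finset.mem_image, Finset.mem_univ, true_and] at h
    obtain ⟨⟨i, b⟩, hp⟩ := h
    subst hp
    rw [Finset.sum_eq_single i]
    · cases b <;> simp
    · intro j _ hj
      simp [Function.update_of_ne hj]
    · intro h; exact absurd (Finset.mem_univ i) h
  · intro h
    have hex : ∃ i, (x i - z i).natAbs ≠ 0 := by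
      by_contra hc
      push_neg at hc
      rw [Finset.sum_eq_zero (fun i _ => hc i)] at h
      exact one_ne_zero h.symm
    obtain ⟨i, hi⟩ := hex
    have h1 : (x i - z i).natAbs = 1 := by
      have hle : (x i - z i).natAbs ≤ 1 := by
        calc (x i - z i).natAbs ≤ ∑ j, (x j - z j).natAbs :=
              Finset.single_le_sum (f := fun j => (x j - z j).natAbs)
                (fun j _ => Nat.zero_le _) (Finset.mem_univ i)
          _ = 1 := h
      omega
    have hz : ∀ j, j ≠ i → (x j - z j).natAbs = 0 := by
      have hrest : ∑ j ∈ Finset.univ.erase i, (x j - z j).natAbs = 0 := by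
        rw [← Finset.sum_erase_add Finset.univ (fun j => (x j - z j).natAbs)
          (Finset.mem_univ i)] at h
        omega
      intro j hj
      exact (Finset.sum_eq_zero_iff.1 hrest) j (Finset.mem_erase.2 ⟨hj, Finset.mem_univ j⟩)
    have hzj : ∀ j, j ≠ i → z j = x j := by
      intro j hj
      have := Int.natAbs_eq_zero.1 (hz j hj)
      omega
    rcases Int.natAbs_eq_iff.1 h1 with hc | hc
    · -- x i - z i = 1, z i = x i + (-1)
      refine Finset.mem_image.2 ⟨(i, false), Finset.mem_univ _, ?_⟩
      funext j
      by_cases hj : j = i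
      · subst hj; simp only [Function.update_self]
        simp only [if_neg (by simp : ¬(false = true))]
        omega
      · rw [Function.update_of_ne hj]
        exact (hzj j hj).symm
    · refine Finset.mem_image.2 ⟨(i, true), Finset.mem_univ _, ?_⟩
      funext j
      by_cases hj : j = i
      · subst hj; simp only [Function.update_self]
        norm_num
        omega
      · rw [Function.update_of_ne hj]
        exact (hzj j hj).symm

lemma adj_eq {d : ℕ} (x z : Zd d) : adj x z = if z ∈ nbr x then 1 else 0 :=
  if_congr mem_nbr.symm rfl rfl

lemma adj_symm {d : ℕ} (x y : Zd d) : adj x y = adj y x := by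
  unfold adj
  rw [show (∑ i, (x i - y i).natAbs) = ∑ i, (y i - x i).natAbs from
    Finset.sum_congr rfl fun i _ => by rw [← Int.natAbs_neg, neg_sub]]

lemma card_nbr_le {d : ℕ} (x : Zd d) : ((nbr x).card : ℝ) ≤ 2 * d := by
  have h1 : (nbr x).card ≤ 2 * d := by
    calc (nbr x).card ≤ (Finset.univ : Finset (Fin d × Bool)).card := Finset.card_image_le
      _ = d * 2 := by simp [Fintype.card_prod]
      _ = 2 * d := by ring
  exact_mod_cast h1

lemma tsum_adj_mul {d : ℕ} (x : Zd d) (f : Zd d → ℝ) :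
    ∑' z, adj x z * f z = ∑ z ∈ nbr x, f z := by
  rw [tsum_eq_sum (s := nbr x) (fun z hz => by rw [adj_eq, if_neg hz, zero_mul])]
  exact Finset.sum_congr rfl fun z hz => by rw [adj_eq, if_pos hz, one_mul]

lemma tsum_mul_adj {d : ℕ} (y : Zd d) (f : Zd d → ℝ) :
    ∑' z, f z * adj z y = ∑ z ∈ nbr y, f z := by
  rw [tsum_eq_sum (s := nbr y)
    (fun z hz => by rw [adj_symm, adj_eq, if_neg hz, mul_zero])]
  exact Finset.sum_congr rfl fun z hz => by rw [adj_symm, adj_eq, if_pos hz, mul_one]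

lemma summable_adj_mul {d : ℕ} (x : Zd d) (f : Zd d → ℝ) :
    Summable (fun z => adj x z * f z) :=
  summable_of_ne_finset_zero (s := nbr x) (fun z hz => by rw [adj_eq, if_neg hz, zero_mul])

lemma summable_mul_adj {d : ℕ} (y : Zd d) (f : Zd d → ℝ) :
    Summable (fun z => f z * adj z y) :=
  summable_of_ne_finset_zero (s := nbr y)
    (fun z hz => by rw [adj_symm, adj_eq, if_neg hz, mul_zero])

lemma adjPow_succ_left {d : ℕ} (n : ℕ) (x y : Zd d) :
    adjPow d (n + 1) x y = ∑ z ∈ nbr x, adjPow d n z y := by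
  show (∑' z : Zd d, adj x z * adjPow d n z y) = _
  exact tsum_adj_mul x _

lemma adjPow_nonneg {d : ℕ} (n : ℕ) (x y : Zd d) : 0 ≤ adjPow d n x y := by
  induction n generalizing x y with
  | zero => simp only [adjPow]; positivity
  | succ n ih =>
    rw [adjPow_succ_left]
    exact Finset.sum_nonneg fun z _ => ih z y

lemma adjPow_le {d : ℕ} (n : ℕ) (x y : Zd d) : adjPow d n x y ≤ (2 * d) ^ n := by
  induction n generalizing x y with
  | zero => simp only [adjPow, pow_zero]; split <;> norm_num
  | succ n ih =>
    rw [adjPow_succ_left]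
    calc ∑ z ∈ nbr x, adjPow d n z y ≤ ∑ _z ∈ nbr x, ((2 : ℝ) * d) ^ n :=
          Finset.sum_le_sum fun z _ => ih z y
      _ = (nbr x).card * (2 * d) ^ n := by rw [Finset.sum_const, nsmul_eq_mul]
      _ ≤ (2 * d) * (2 * d) ^ n := by
          apply mul_le_mul_of_nonneg_right (card_nbr_le x) (by positivity)
      _ = (2 * d) ^ (n + 1) := by rw [pow_succ]; ring

lemma adjPow_succ_right {d : ℕ} (n : ℕ) (x y : Zd d) :
    adjPow d (n + 1) x y = ∑ z ∈ nbr y, adjPow d n x z := by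
  induction n generalizing x y with
  | zero =>
    rw [adjPow_succ_left]
    show (∑ z ∈ nbr x, if z = y then (1:ℝ) else 0) = ∑ z ∈ nbr y, if x = z then (1:ℝ) else 0
    rw [Finset.sum_ite_eq' (nbr x) y (fun _ => (1:ℝ)), Finset.sum_ite_eq (nbr y) x (fun _ => (1:ℝ))]
    have : y ∈ nbr x ↔ x ∈ nbr y := by
      rw [mem_nbr, mem_nbr]
      constructor <;> intro h <;>
        · rw [show (∑ i, _) = _ from Finset.sum_congr rfl
            (fun i _ => by rw [← Int.natAbs_neg, neg_sub])]
          exact h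
    rw [if_congr this rfl rfl]
  | succ n ih =>
    rw [adjPow_succ_left]
    calc ∑ w ∈ nbr x, adjPow d (n + 1) w y
        = ∑ w ∈ nbr x, ∑ z ∈ nbr y, adjPow d n w z := Finset.sum_congr rfl fun w _ => ih w y
      _ = ∑ z ∈ nbr y, ∑ w ∈ nbr x, adjPow d n w z := Finset.sum_comm
      _ = ∑ z ∈ nbr y, adjPow d (n + 1) x z := Finset.sum_congr rfl fun z _ =>
            (adjPow_succ_left n x z).symm

/-- the L¹ ball as a finset -/
noncomputable def ball {d : ℕ} (x : Zd d) (n : ℕ) : Finset (Zd d) :=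
  Fintype.piFinset (fun i => Finset.Icc (x i - n) (x i + n))

lemma adjPow_eq_zero_of_far {d : ℕ} (n : ℕ) (x y : Zd d)
    (h : n < ∑ i, (x i - y i).natAbs) : adjPow d n x y = 0 := by
  induction n generalizing x y with
  | zero =>
    have hne : x ≠ y := by
      rintro rfl
      simp at h
    simp only [adjPow, if_neg hne]
  | succ n ih =>
    rw [adjPow_succ_left]
    apply Finset.sum_eq_zero
    intro z hz
    apply ih
    have h1 : (∑ i, (x i - z i).natAbs) = 1 := mem_nbr.1 hz
    have htri : (∑ i, (x i - y i).natAbs) ≤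
        (∑ i, (x i - z i).natAbs) + ∑ i, (z i - y i).natAbs := by
      rw [← Finset.sum_add_distrib]
      apply Finset.sum_le_sum
      intro i _
      calc (x i - y i).natAbs = ((x i - z i) + (z i - y i)).natAbs := by ring_nf
        _ ≤ (x i - z i).natAbs + (z i - y i).natAbs := Int.natAbs_add_le _ _
    omega

lemma adjPow_eq_zero_of_not_mem_ball {d : ℕ} (n : ℕ) (x z : Zd d)
    (h : z ∉ ball x n) : adjPow d n x z = 0 := by
  apply adjPow_eq_zero_of_far
  simp only [ball, Fintype.mem_piFinset, Finset.mem_Icc] at h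
  push_neg at h
  obtain ⟨i, hi⟩ := h
  have hgt : n < (x i - z i).natAbs := by omega
  calc n < (x i - z i).natAbs := hgt
    _ ≤ ∑ j, (x j - z j).natAbs :=
        Finset.single_le_sum (f := fun j => (x j - z j).natAbs)
          (fun j _ => Nat.zero_le _) (Finset.mem_univ i)

lemma summable_row_adjPow {d : ℕ} (n : ℕ) (x : Zd d) :
    Summable (fun z => adjPow d n x z) :=
  summable_of_ne_finset_zero (s := ball x n) (fun z hz => adjPow_eq_zero_of_not_mem_ball n x z hz)

lemma rowsum_adjPow_le {d : ℕ} (n : ℕ) (x : Zd d) :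
    ∑' z : Zd d, adjPow d n x z ≤ (2 * d) ^ n := by
  induction n generalizing x with
  | zero =>
    show (∑' z : Zd d, if x = z then (1:ℝ) else 0) ≤ _
    rw [show (fun z : Zd d => if x = z then (1:ℝ) else 0) = fun z => if z = x then (1:ℝ) else 0
      from funext fun z => if_congr eq_comm rfl rfl, tsum_ite_eq]
    norm_num
  | succ n ih =>
    have : ∑' z : Zd d, adjPow d (n+1) x z = ∑ w ∈ nbr x, ∑' z : Zd d, adjPow d n w z := by
      rw [show (fun z : Zd d => adjPow d (n+1) x z) = fun z => ∑ w ∈ nbr x, adjPow d n w z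
        from funext fun z => adjPow_succ_left n x z]
      exact Summable.tsum_finsetSum fun w _ => summable_row_adjPow n w
    rw [this]
    calc ∑ w ∈ nbr x, ∑' z : Zd d, adjPow d n w z ≤ ∑ _w ∈ nbr x, ((2:ℝ) * d) ^ n :=
          Finset.sum_le_sum fun w _ => ih w
      _ = (nbr x).card * (2 * d) ^ n := by rw [Finset.sum_const, nsmul_eq_mul]
      _ ≤ (2 * d) * (2 * d) ^ n :=
          mul_le_mul_of_nonneg_right (card_nbr_le x) (by positivity)
      _ = (2 * d) ^ (n + 1) := by rw [pow_succ]; ring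

/-- The resolvent `(I - λ∂)⁻¹` via its Neumann series, entrywise. -/
noncomputable def res (d : ℕ) (lam : ℝ) (x y : Zd d) : ℝ :=
  ∑' n : ℕ, lam ^ n * adjPow d n x y

/-- Entrywise powers of a general infinite matrix `C`. -/
noncomputable def matPow {d : ℕ} (C : Zd d → Zd d → ℝ) : ℕ → Zd d → Zd d → ℝ
  | 0 => fun x y => if x = y then 1 else 0
  | n + 1 => fun x y => ∑' z : Zd d, C x z * matPow C n z y

section series
variable {d : ℕ} {mu : ℝ}

/-- `∂(I-μ∂)⁻¹`, entrywise. -/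
noncomputable def Aser (d : ℕ) (mu : ℝ) (x y : Zd d) : ℝ :=
  ∑' m : ℕ, mu ^ m * adjPow d (m + 1) x y

lemma summable_res_term (h0 : 0 ≤ mu) (h1 : mu * (2 * d) < 1) (x y : Zd d) :
    Summable (fun m => mu ^ m * adjPow d m x y) := by
  apply Summable.of_nonneg_of_le (fun m => mul_nonneg (pow_nonneg h0 m) (adjPow_nonneg _ _ _))
    (fun m => ?_) (summable_geometric_of_lt_one (mul_nonneg h0 (by positivity)) h1)
  calc mu ^ m * adjPow d m x y ≤ mu ^ m * (2 * d) ^ m :=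
        mul_le_mul_of_nonneg_left (adjPow_le m x y) (pow_nonneg h0 m)
    _ = (mu * (2 * d)) ^ m := (mul_pow _ _ _).symm

lemma summable_A_term (h0 : 0 ≤ mu) (h1 : mu * (2 * d) < 1) (x y : Zd d) :
    Summable (fun m => mu ^ m * adjPow d (m + 1) x y) := by
  apply Summable.of_nonneg_of_le (fun m => mul_nonneg (pow_nonneg h0 m) (adjPow_nonneg _ _ _)) (fun m => ?_)
    ((summable_geometric_of_lt_one (mul_nonneg h0 (by positivity)) h1).mul_left ((2:ℝ) * d))
  calc mu ^ m * adjPow d (m + 1) x y ≤ mu ^ m * (2 * d) ^ (m + 1) :=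
        mul_le_mul_of_nonneg_left (adjPow_le (m + 1) x y) (pow_nonneg h0 m)
    _ = 2 * d * (mu * (2 * d)) ^ m := by rw [mul_pow, pow_succ]; ring

lemma res_nonneg (h0 : 0 ≤ mu) (x y : Zd d) : 0 ≤ res d mu x y :=
  tsum_nonneg fun m => mul_nonneg (pow_nonneg h0 m) (adjPow_nonneg _ _ _)

lemma A_nonneg (h0 : 0 ≤ mu) (x y : Zd d) : 0 ≤ Aser d mu x y :=
  tsum_nonneg fun m => mul_nonneg (pow_nonneg h0 m) (adjPow_nonneg _ _ _)

lemma res_le (h0 : 0 ≤ mu) (h1 : mu * (2 * d) < 1) (x y : Zd d) :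
    res d mu x y ≤ (1 - mu * (2 * d))⁻¹ := by
  rw [← tsum_geometric_of_lt_one (mul_nonneg h0 (by positivity)) h1]
  apply Summable.tsum_le_tsum (fun m => ?_) (summable_res_term h0 h1 x y)
    (summable_geometric_of_lt_one (mul_nonneg h0 (by positivity)) h1)
  calc mu ^ m * adjPow d m x y ≤ mu ^ m * (2 * d) ^ m :=
        mul_le_mul_of_nonneg_left (adjPow_le m x y) (pow_nonneg h0 m)
    _ = (mu * (2 * d)) ^ m := (mul_pow _ _ _).symm

lemma A_le (h0 : 0 ≤ mu) (h1 : mu * (2 * d) < 1) (x y : Zd d) :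
    Aser d mu x y ≤ 2 * d * (1 - mu * (2 * d))⁻¹ := by
  have := tsum_geometric_of_lt_one (mul_nonneg h0 (by positivity)) h1
  have h2 : ∑' m : ℕ, 2 * d * (mu * (2 * d)) ^ m = 2 * d * (1 - mu * (2 * d))⁻¹ := by
    rw [tsum_mul_left, this]
  rw [← h2]
  apply Summable.tsum_le_tsum (fun m => ?_) (summable_A_term h0 h1 x y)
    ((summable_geometric_of_lt_one (mul_nonneg h0 (by positivity)) h1).mul_left ((2:ℝ) * d))
  calc mu ^ m * adjPow d (m + 1) x y ≤ mu ^ m * (2 * d) ^ (m + 1) :=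
        mul_le_mul_of_nonneg_left (adjPow_le (m + 1) x y) (pow_nonneg h0 m)
    _ = 2 * d * (mu * (2 * d)) ^ m := by rw [mul_pow, pow_succ]; ring

lemma res_eq (h0 : 0 ≤ mu) (h1 : mu * (2 * d) < 1) (x y : Zd d) :
    res d mu x y = (if x = y then 1 else 0) + mu * Aser d mu x y := by
  unfold res
  rw [Summable.tsum_eq_zero_add (summable_res_term h0 h1 x y)]
  congr 1
  · simp [adjPow]
  · unfold Aser
    rw [← tsum_mul_left]
    congr 1
    funext m
    rw [pow_succ']
    ring

lemma A_left (h0 : 0 ≤ mu) (h1 : mu * (2 * d) < 1) (x y : Zd d) :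
    Aser d mu x y = ∑ w ∈ nbr x, res d mu w y := by
  unfold Aser
  calc ∑' m : ℕ, mu ^ m * adjPow d (m + 1) x y
      = ∑' m : ℕ, ∑ w ∈ nbr x, mu ^ m * adjPow d m w y := by
        congr 1; funext m; rw [adjPow_succ_left, Finset.mul_sum]
    _ = ∑ w ∈ nbr x, ∑' m : ℕ, mu ^ m * adjPow d m w y :=
        Summable.tsum_finsetSum fun w _ => summable_res_term h0 h1 w y
    _ = ∑ w ∈ nbr x, res d mu w y := rfl

lemma A_right (h0 : 0 ≤ mu) (h1 : mu * (2 * d) < 1) (x y : Zd d) :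
    Aser d mu x y = ∑ w ∈ nbr y, res d mu x w := by
  unfold Aser
  calc ∑' m : ℕ, mu ^ m * adjPow d (m + 1) x y
      = ∑' m : ℕ, ∑ w ∈ nbr y, mu ^ m * adjPow d m x w := by
        congr 1; funext m; rw [adjPow_succ_right, Finset.mul_sum]
    _ = ∑ w ∈ nbr y, ∑' m : ℕ, mu ^ m * adjPow d m x w :=
        Summable.tsum_finsetSum fun w _ => summable_res_term h0 h1 x w
    _ = ∑ w ∈ nbr y, res d mu x w := rfl

lemma tsum_adj_res (h0 : 0 ≤ mu) (h1 : mu * (2 * d) < 1) (x y : Zd d) :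
    ∑' z : Zd d, adj x z * res d mu z y = Aser d mu x y := by
  rw [tsum_adj_mul, A_left h0 h1]

lemma tsum_res_adj (h0 : 0 ≤ mu) (h1 : mu * (2 * d) < 1) (x y : Zd d) :
    ∑' z : Zd d, res d mu x z * adj z y = Aser d mu x y := by
  rw [tsum_mul_adj, A_right h0 h1]

end series

lemma adj_nonneg {d : ℕ} (x z : Zd d) : 0 ≤ adj x z := by
  unfold adj; split <;> norm_num

section fub
variable {d : ℕ} {mu : ℝ}

lemma summable_row_res (h0 : 0 ≤ mu) (h1 : mu * (2 * d) < 1) (x : Zd d) :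
    Summable (fun z => res d mu x z) := by
  have hnn : ∀ p : ℕ × Zd d, 0 ≤ mu ^ p.1 * adjPow d p.1 x p.2 :=
    fun p => mul_nonneg (pow_nonneg h0 _) (adjPow_nonneg _ _ _)
  have h2 : ∀ m : ℕ, Summable (fun z => mu ^ m * adjPow d m x z) := fun m =>
    (summable_row_adjPow m x).mul_left _
  have h3 : Summable (fun m : ℕ => ∑' z : Zd d, mu ^ m * adjPow d m x z) := by
    apply Summable.of_nonneg_of_le
      (fun m => tsum_nonneg fun z => hnn (m, z)) (fun m => ?_)
      (summable_geometric_of_lt_one (mul_nonneg h0 (by positivity)) h1)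
    show (∑' z : Zd d, mu ^ m * adjPow d m x z) ≤ _
    rw [tsum_mul_left]
    calc mu ^ m * ∑' z : Zd d, adjPow d m x z ≤ mu ^ m * (2 * d) ^ m :=
          mul_le_mul_of_nonneg_left (rowsum_adjPow_le m x) (pow_nonneg h0 m)
      _ = (mu * (2 * d)) ^ m := (mul_pow _ _ _).symm
  have hf : Summable (fun p : ℕ × Zd d => mu ^ p.1 * adjPow d p.1 x p.2) :=
    (summable_prod_of_nonneg hnn).2 ⟨h2, h3⟩
  have hswap := hf.prod_symm
  exact ((summable_prod_of_nonneg (f := fun p : Zd d × ℕ => mu ^ p.2 * adjPow d p.2 x p.1)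
    (fun p => hnn (p.2, p.1))).1 hswap).2

lemma summable_row_A (h0 : 0 ≤ mu) (h1 : mu * (2 * d) < 1) (x : Zd d) :
    Summable (fun z => Aser d mu x z) := by
  have hnn : ∀ p : ℕ × Zd d, 0 ≤ mu ^ p.1 * adjPow d (p.1 + 1) x p.2 :=
    fun p => mul_nonneg (pow_nonneg h0 _) (adjPow_nonneg _ _ _)
  have h2 : ∀ m : ℕ, Summable (fun z => mu ^ m * adjPow d (m + 1) x z) := fun m =>
    (summable_row_adjPow (m + 1) x).mul_left _
  have h3 : Summable (fun m : ℕ => ∑' z : Zd d, mu ^ m * adjPow d (m + 1) x z) := by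
    apply Summable.of_nonneg_of_le
      (fun m => tsum_nonneg fun z => hnn (m, z)) (fun m => ?_)
      ((summable_geometric_of_lt_one (mul_nonneg h0 (by positivity)) h1).mul_left ((2:ℝ) * d))
    show (∑' z : Zd d, mu ^ m * adjPow d (m + 1) x z) ≤ _
    rw [tsum_mul_left]
    calc mu ^ m * ∑' z : Zd d, adjPow d (m + 1) x z ≤ mu ^ m * (2 * d) ^ (m + 1) :=
          mul_le_mul_of_nonneg_left (rowsum_adjPow_le (m + 1) x) (pow_nonneg h0 m)
      _ = 2 * d * (mu * (2 * d)) ^ m := by rw [mul_pow, pow_succ]; ring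
  have hf : Summable (fun p : ℕ × Zd d => mu ^ p.1 * adjPow d (p.1 + 1) x p.2) :=
    (summable_prod_of_nonneg hnn).2 ⟨h2, h3⟩
  have hswap := hf.prod_symm
  exact ((summable_prod_of_nonneg (f := fun p : Zd d × ℕ => mu ^ p.2 * adjPow d (p.2 + 1) x p.1)
    (fun p => hnn (p.2, p.1))).1 hswap).2

lemma tsum_delta_mul (x : Zd d) (f : Zd d → ℝ) :
    ∑' z : Zd d, (if x = z then 1 else 0) * f z = f x := by
  rw [show (fun z : Zd d => (if x = z then 1 else 0) * f z)
      = fun z : Zd d => if z = x then f x else 0 from funext fun z => by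
    by_cases h : z = x
    · subst h; simp
    · rw [if_neg h, if_neg (fun hh => h hh.symm), zero_mul]]
  exact tsum_ite_eq x (fun _ => f x)

lemma tsum_mul_delta (y : Zd d) (f : Zd d → ℝ) :
    ∑' z : Zd d, f z * (if z = y then 1 else 0) = f y := by
  rw [show (fun z : Zd d => f z * (if z = y then 1 else 0))
      = fun z : Zd d => if z = y then f y else 0 from funext fun z => by
    by_cases h : z = y
    · subst h; simp
    · rw [if_neg h, if_neg h, mul_zero]]
  exact tsum_ite_eq y (fun _ => f y)

lemma summable_delta_mul (x : Zd d) (f : Zd d → ℝ) :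
    Summable (fun z : Zd d => (if x = z then 1 else 0) * f z) :=
  summable_of_ne_finset_zero (s := {x}) (fun z hz => by
    rw [if_neg (fun h => hz (by simp [h.symm])), zero_mul])

/-- The key Fubini swap: `(∂R_λ)R_μ = R_λ(∂R_μ)`. -/
lemma VT_swap {lam : ℝ} (hl0 : 0 ≤ lam) (hl : lam * (2 * d) < 1)
    (hm0 : 0 ≤ mu) (hm : mu * (2 * d) < 1) (x y : Zd d) :
    ∑' z : Zd d, Aser d lam x z * res d mu z y
      = ∑' z : Zd d, res d lam x z * Aser d mu z y := by
  set F : Zd d → Zd d → ℝ := fun v z => res d lam x v * (adj v z * res d mu z y) with hF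
  have hFnn : ∀ v z, 0 ≤ F v z := fun v z =>
    mul_nonneg (res_nonneg hl0 x v) (mul_nonneg (adj_nonneg v z) (res_nonneg hm0 z y))
  have hsec1 : ∀ v, Summable (fun z => F v z) := fun v =>
    ((summable_adj_mul v (fun z => res d mu z y)).mul_left _)
  have hsec2 : ∀ z, Summable (fun v => F v z) := fun v => by
    apply summable_of_ne_finset_zero (s := nbr v)
    intro w hw
    have : adj w v = 0 := by rw [adj_symm, adj_eq, if_neg hw]
    simp [hF, this]
  have hrow : ∀ v, ∑' z : Zd d, F v z = res d lam x v * Aser d mu v y := fun v => by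
    rw [hF, tsum_mul_left, tsum_adj_res hm0 hm]
  have hmarg : Summable (fun v => ∑' z : Zd d, F v z) := by
    apply Summable.of_nonneg_of_le (fun v => tsum_nonneg (fun z => hFnn v z)) (fun v => ?_)
      ((summable_row_res hl0 hl x).mul_right (2 * d * (1 - mu * (2 * d))⁻¹))
    rw [hrow v]
    exact mul_le_mul_of_nonneg_left (A_le hm0 hm v y) (res_nonneg hl0 x v)
  have huncurry : Summable (Function.uncurry F) :=
    (summable_prod_of_nonneg (fun p => hFnn p.1 p.2)).2 ⟨hsec1, hmarg⟩
  have hcomm := Summable.tsum_comm' huncurry hsec1 hsec2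
  calc ∑' z : Zd d, Aser d lam x z * res d mu z y
      = ∑' z : Zd d, ∑' v : Zd d, F v z := by
        congr 1; funext z
        rw [← tsum_res_adj hl0 hl x z, ← tsum_mul_right]
        congr 1; funext v; rw [hF]; ring
    _ = ∑' v : Zd d, ∑' z : Zd d, F v z := hcomm
    _ = ∑' z : Zd d, res d lam x z * Aser d mu z y := by
        congr 1; funext v; exact hrow v

end fub

section main
variable {d : ℕ} {lam a0 : ℝ}

/-- The majorant `(I-λ∂)(I-λ(1+a₀)∂)⁻¹ = I + a₀λ ∂(I-λ(1+a₀)∂)⁻¹`. -/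
noncomputable def Eop (d : ℕ) (lam a0 : ℝ) (x y : Zd d) : ℝ :=
  (if x = y then 1 else 0) + a0 * lam * Aser d (lam * (1 + a0)) x y

lemma E_nonneg (hl0 : 0 ≤ lam) (ha : 0 < a0) (x y : Zd d) : 0 ≤ Eop d lam a0 x y := by
  have h1 : (0:ℝ) ≤ if x = y then 1 else 0 := by split <;> norm_num
  have h2 : 0 ≤ Aser d (lam * (1 + a0)) x y :=
    A_nonneg (mul_nonneg hl0 (by linarith)) x y
  have : 0 ≤ a0 * lam * Aser d (lam * (1 + a0)) x y := by positivity
  unfold Eop; linarith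

lemma E_le (hl0 : 0 ≤ lam) (ha : 0 < a0) (hl' : lam * (1 + a0) * (2 * d) < 1) (x y : Zd d) :
    Eop d lam a0 x y ≤ 1 + a0 * lam * (2 * d * (1 - lam * (1 + a0) * (2 * d))⁻¹) := by
  have h1 : (if x = y then (1:ℝ) else 0) ≤ 1 := by split <;> norm_num
  have h2 : a0 * lam * Aser d (lam * (1 + a0)) x y
      ≤ a0 * lam * (2 * d * (1 - lam * (1 + a0) * (2 * d))⁻¹) := by
    apply mul_le_mul_of_nonneg_left _ (by positivity)
    exact A_le (mul_nonneg hl0 (by linarith)) hl' x y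
  unfold Eop; linarith

lemma E_eq_sub (hl0 : 0 ≤ lam) (ha : 0 < a0) (hl' : lam * (1 + a0) * (2 * d) < 1) (x y : Zd d) :
    Eop d lam a0 x y = res d (lam * (1 + a0)) x y - lam * Aser d (lam * (1 + a0)) x y := by
  rw [res_eq (mul_nonneg hl0 (by linarith)) hl' x y, Eop]
  ring

lemma RHS_eq (hl0 : 0 ≤ lam) (ha : 0 < a0) (hl' : lam * (1 + a0) * (2 * d) < 1) (x y : Zd d) :
    ∑' z : Zd d, ((if x = z then 1 else 0) - lam * adj x z) * res d (lam * (1 + a0)) z y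
      = Eop d lam a0 x y := by
  have hm0 : 0 ≤ lam * (1 + a0) := mul_nonneg hl0 (by linarith)
  calc ∑' z : Zd d, ((if x = z then 1 else 0) - lam * adj x z) * res d (lam * (1 + a0)) z y
      = ∑' z : Zd d, ((if x = z then 1 else 0) * res d (lam * (1 + a0)) z y
          - lam * (adj x z * res d (lam * (1 + a0)) z y)) := by
        congr 1; funext z; ring
    _ = (∑' z : Zd d, (if x = z then 1 else 0) * res d (lam * (1 + a0)) z y)
          - ∑' z : Zd d, lam * (adj x z * res d (lam * (1 + a0)) z y) :=
        Summable.tsum_sub (summable_delta_mul x _) ((summable_adj_mul x _).mul_left lam)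
    _ = res d (lam * (1 + a0)) x y - lam * Aser d (lam * (1 + a0)) x y := by
        rw [tsum_delta_mul, tsum_mul_left, tsum_adj_res hm0 hl']
    _ = Eop d lam a0 x y := (E_eq_sub hl0 ha hl' x y).symm

lemma summable_res_mul_E (hl0 : 0 ≤ lam) (hl : lam * (2 * d) < 1) (ha : 0 < a0)
    (hl' : lam * (1 + a0) * (2 * d) < 1) (w y : Zd d) :
    Summable (fun z => res d lam w z * Eop d lam a0 z y) := by
  apply Summable.of_nonneg_of_le
    (fun z => mul_nonneg (res_nonneg hl0 w z) (E_nonneg hl0 ha z y)) (fun z => ?_)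
    ((summable_row_res hl0 hl w).mul_right
      (1 + a0 * lam * (2 * d * (1 - lam * (1 + a0) * (2 * d))⁻¹)))
  exact mul_le_mul_of_nonneg_left (E_le hl0 ha hl' z y) (res_nonneg hl0 w z)

/-- Key identity: `R_λ E = R_{λ(1+a₀)}`. -/
lemma res_mul_E (hl0 : 0 ≤ lam) (hl : lam * (2 * d) < 1) (ha : 0 < a0)
    (hl' : lam * (1 + a0) * (2 * d) < 1) (x y : Zd d) :
    ∑' z : Zd d, res d lam x z * Eop d lam a0 z y = res d (lam * (1 + a0)) x y := by
  have hm0 : 0 ≤ lam * (1 + a0) := mul_nonneg hl0 (by linarith)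
  have hMres : (0:ℝ) ≤ (1 - lam * (1 + a0) * (2 * d))⁻¹ := by
    apply inv_nonneg.2; linarith
  have hsRR : Summable (fun z => res d lam x z * res d (lam * (1 + a0)) z y) := by
    apply Summable.of_nonneg_of_le
      (fun z => mul_nonneg (res_nonneg hl0 x z) (res_nonneg hm0 z y)) (fun z => ?_)
      ((summable_row_res hl0 hl x).mul_right ((1 - lam * (1 + a0) * (2 * d))⁻¹))
    exact mul_le_mul_of_nonneg_left (res_le hm0 hl' z y) (res_nonneg hl0 x z)
  have hsRA : Summable (fun z => res d lam x z * Aser d (lam * (1 + a0)) z y) := by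
    apply Summable.of_nonneg_of_le
      (fun z => mul_nonneg (res_nonneg hl0 x z) (A_nonneg hm0 z y)) (fun z => ?_)
      ((summable_row_res hl0 hl x).mul_right (2 * d * (1 - lam * (1 + a0) * (2 * d))⁻¹))
    exact mul_le_mul_of_nonneg_left (A_le hm0 hl' z y) (res_nonneg hl0 x z)
  have hsAR : Summable (fun z => Aser d lam x z * res d (lam * (1 + a0)) z y) := by
    apply Summable.of_nonneg_of_le
      (fun z => mul_nonneg (A_nonneg hl0 x z) (res_nonneg hm0 z y)) (fun z => ?_)
      ((summable_row_A hl0 hl x).mul_right ((1 - lam * (1 + a0) * (2 * d))⁻¹))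
    exact mul_le_mul_of_nonneg_left (res_le hm0 hl' z y) (A_nonneg hl0 x z)
  have hU : ∑' z : Zd d, res d lam x z * res d (lam * (1 + a0)) z y
      = res d (lam * (1 + a0)) x y
        + lam * ∑' z : Zd d, Aser d lam x z * res d (lam * (1 + a0)) z y := by
    calc ∑' z : Zd d, res d lam x z * res d (lam * (1 + a0)) z y
        = ∑' z : Zd d, ((if x = z then 1 else 0) * res d (lam * (1 + a0)) z y
            + lam * (Aser d lam x z * res d (lam * (1 + a0)) z y)) := by
          congr 1; funext z
          rw [res_eq hl0 hl x z]; ring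
      _ = (∑' z : Zd d, (if x = z then 1 else 0) * res d (lam * (1 + a0)) z y)
            + ∑' z : Zd d, lam * (Aser d lam x z * res d (lam * (1 + a0)) z y) :=
          Summable.tsum_add (summable_delta_mul x _) (hsAR.mul_left lam)
      _ = res d (lam * (1 + a0)) x y
            + lam * ∑' z : Zd d, Aser d lam x z * res d (lam * (1 + a0)) z y := by
          rw [tsum_delta_mul, tsum_mul_left]
  calc ∑' z : Zd d, res d lam x z * Eop d lam a0 z y
      = ∑' z : Zd d, (res d lam x z * res d (lam * (1 + a0)) z y
          - lam * (res d lam x z * Aser d (lam * (1 + a0)) z y)) := by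
        congr 1; funext z; rw [E_eq_sub hl0 ha hl' z y]; ring
    _ = (∑' z : Zd d, res d lam x z * res d (lam * (1 + a0)) z y)
          - ∑' z : Zd d, lam * (res d lam x z * Aser d (lam * (1 + a0)) z y) :=
        Summable.tsum_sub hsRR (hsRA.mul_left lam)
    _ = res d (lam * (1 + a0)) x y := by
        rw [hU, tsum_mul_left, VT_swap hl0 hl hm0 hl' x y]
        ring

/-- `(∂R_λ) E = ∂R_{λ(1+a₀)}`. -/
lemma A_mul_E (hl0 : 0 ≤ lam) (hl : lam * (2 * d) < 1) (ha : 0 < a0)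
    (hl' : lam * (1 + a0) * (2 * d) < 1) (x y : Zd d) :
    ∑' z : Zd d, Aser d lam x z * Eop d lam a0 z y = Aser d (lam * (1 + a0)) x y := by
  have hm0 : 0 ≤ lam * (1 + a0) := mul_nonneg hl0 (by linarith)
  calc ∑' z : Zd d, Aser d lam x z * Eop d lam a0 z y
      = ∑' z : Zd d, ∑ w ∈ nbr x, res d lam w z * Eop d lam a0 z y := by
        congr 1; funext z
        rw [A_left hl0 hl x z, Finset.sum_mul]
    _ = ∑ w ∈ nbr x, ∑' z : Zd d, res d lam w z * Eop d lam a0 z y :=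
        Summable.tsum_finsetSum fun w _ => summable_res_mul_E hl0 hl ha hl' w y
    _ = ∑ w ∈ nbr x, res d (lam * (1 + a0)) w y :=
        Finset.sum_congr rfl fun w _ => res_mul_E hl0 hl ha hl' w y
    _ = Aser d (lam * (1 + a0)) x y := (A_left hm0 hl' x y).symm

end main

section final
variable {d : ℕ} {lam a0 : ℝ} {C : Zd d → Zd d → ℝ}

lemma matPow_nonneg (hC0 : ∀ x y : Zd d, 0 ≤ C x y) :
    ∀ (k : ℕ) (x y : Zd d), 0 ≤ matPow C k x y := by
  intro k
  induction k with
  | zero => intro x y; show (0:ℝ) ≤ if x = y then 1 else 0; split <;> norm_num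
  | succ k ih =>
    intro x y
    exact tsum_nonneg fun z => mul_nonneg (hC0 x z) (ih z y)

lemma tsum_pow_succ_eq (x y : Zd d) :
    ∑' n : ℕ, lam ^ (n + 1) * adjPow d (n + 1) x y = lam * Aser d lam x y := by
  unfold Aser
  rw [← tsum_mul_left]
  congr 1; funext n; rw [pow_succ']; ring

lemma partial_le (hl0 : 0 ≤ lam) (hl : lam * (2 * d) < 1) (ha : 0 < a0)
    (hl' : lam * (1 + a0) * (2 * d) < 1)
    (hC : ∀ x y : Zd d,
      0 ≤ C x y ∧ C x y ≤ a0 * ∑' n : ℕ, lam ^ (n + 1) * adjPow d (n + 1) x y) :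
    ∀ (K : ℕ) (x y : Zd d),
      ∑ k ∈ Finset.range K, matPow C k x y ≤ Eop d lam a0 x y := by
  have hC0 : ∀ x y : Zd d, 0 ≤ C x y := fun x y => (hC x y).1
  have hCB : ∀ x y : Zd d, C x y ≤ a0 * lam * Aser d lam x y := by
    intro x y
    have := (hC x y).2
    rw [tsum_pow_succ_eq] at this
    linarith [this]
  set ME : ℝ := 1 + a0 * lam * (2 * d * (1 - lam * (1 + a0) * (2 * d))⁻¹) with hME
  have hMEnn : 0 ≤ ME := by
    have ha1 := E_le (d := d) (lam := lam) (a0 := a0) hl0 ha hl' 0 0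
    have ha2 := E_nonneg (d := d) (lam := lam) (a0 := a0) hl0 ha 0 0
    rw [hME]; linarith
  intro K
  induction K with
  | zero =>
    intro x y
    simpa using E_nonneg hl0 ha x y
  | succ K ih =>
    intro x y
    rw [Finset.sum_range_succ']
    have hAnn : ∀ z, 0 ≤ a0 * lam * Aser d lam x z :=
      fun z => mul_nonneg (mul_nonneg ha.le hl0) (A_nonneg hl0 x z)
    have hB_row : Summable (fun z => a0 * lam * Aser d lam x z * Eop d lam a0 z y) := by
      apply Summable.of_nonneg_of_le
        (fun z => mul_nonneg (hAnn z) (E_nonneg hl0 ha z y))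
        (fun z => ?_)
        (((summable_row_A hl0 hl x).mul_left (a0 * lam)).mul_right ME)
      exact mul_le_mul_of_nonneg_left (E_le hl0 ha hl' z y) (hAnn z)
    have hSnn : ∀ z, 0 ≤ ∑ k ∈ Finset.range K, matPow C k z y :=
      fun z => Finset.sum_nonneg fun k _ => matPow_nonneg hC0 k z y
    have hpt : ∀ z, C x z * ∑ k ∈ Finset.range K, matPow C k z y
        ≤ a0 * lam * Aser d lam x z * Eop d lam a0 z y := by
      intro z
      exact mul_le_mul (hCB x z) (ih z y) (hSnn z) (hAnn z)
    have hsum_k : ∀ k ∈ Finset.range K, Summable (fun z => C x z * matPow C k z y) := by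
      intro k hk
      apply Summable.of_nonneg_of_le
        (fun z => mul_nonneg (hC0 x z) (matPow_nonneg hC0 k z y))
        (fun z => ?_) hB_row
      have h1 : matPow C k z y ≤ Eop d lam a0 z y := by
        calc matPow C k z y ≤ ∑ j ∈ Finset.range K, matPow C j z y :=
              Finset.single_le_sum (f := fun j => matPow C j z y)
                (fun j _ => matPow_nonneg hC0 j z y) hk
          _ ≤ Eop d lam a0 z y := ih z y
      exact mul_le_mul (hCB x z) h1 (matPow_nonneg hC0 k z y) (hAnn z)
    have hstep : ∑ k ∈ Finset.range K, matPow C (k + 1) x y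
        ≤ a0 * lam * Aser d (lam * (1 + a0)) x y := by
      have hLHS_summable : Summable (fun z => C x z * ∑ k ∈ Finset.range K, matPow C k z y) :=
        Summable.of_nonneg_of_le (fun z => mul_nonneg (hC0 x z) (hSnn z)) hpt hB_row
      calc ∑ k ∈ Finset.range K, matPow C (k + 1) x y
          = ∑ k ∈ Finset.range K, ∑' z : Zd d, C x z * matPow C k z y := rfl
        _ = ∑' z : Zd d, ∑ k ∈ Finset.range K, C x z * matPow C k z y :=
            (Summable.tsum_finsetSum hsum_k).symm
        _ = ∑' z : Zd d, C x z * ∑ k ∈ Finset.range K, matPow C k z y := by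
            congr 1; funext z; rw [Finset.mul_sum]
        _ ≤ ∑' z : Zd d, a0 * lam * Aser d lam x z * Eop d lam a0 z y :=
            Summable.tsum_le_tsum hpt hLHS_summable hB_row
        _ = a0 * lam * ∑' z : Zd d, Aser d lam x z * Eop d lam a0 z y := by
            rw [← tsum_mul_left]; congr 1; funext z; ring
        _ = a0 * lam * Aser d (lam * (1 + a0)) x y := by
            rw [A_mul_E hl0 hl ha hl' x y]
    have h0 : matPow C 0 x y = if x = y then 1 else 0 := rfl
    rw [h0, Eop]
    linarith [hstep]

/-- If `0 ≤ C_{x,y} ≤ a₀(λ∂(I-λ∂)⁻¹)_{x,y}` entrywise and `λ(1+a₀)2d < 1`, then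
`D = Σ_{n≥0} Cⁿ` converges entrywise and `D_{x,y} ≤ ((I-λ∂)(I-λ(1+a₀)∂)⁻¹)_{x,y}`. -/
theorem dobrushin_matrix_bound (d : ℕ) (hd : 0 < d) (lam a0 : ℝ)
    (h1 : 0 ≤ lam) (h2 : lam < 1 / (2 * d)) (h3 : 0 < a0)
    (h4 : lam * (1 + a0) * (2 * d) < 1)
    (C : Zd d → Zd d → ℝ)
    (hC : ∀ x y : Zd d,
      0 ≤ C x y ∧ C x y ≤ a0 * ∑' n : ℕ, lam ^ (n + 1) * adjPow d (n + 1) x y) :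
    ∀ x y : Zd d,
      Summable (fun n : ℕ => matPow C n x y) ∧
      (∑' n : ℕ, matPow C n x y) ≤
        ∑' z : Zd d,
          ((if x = z then 1 else 0) - lam * adj x z) * res d (lam * (1 + a0)) z y := by
  intro x y
  have hd2 : (0:ℝ) < 2 * d := by positivity
  have hl : lam * (2 * d) < 1 := by
    rw [lt_div_iff₀ hd2] at h2
    exact h2
  have hple := partial_le h1 hl h3 h4 hC
  have hsummable : Summable (fun n : ℕ => matPow C n x y) :=
    summable_of_sum_range_le (fun n => matPow_nonneg (fun x y => (hC x y).1) n x y)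
      (fun n => hple n x y)
  refine ⟨hsummable, ?_⟩
  rw [RHS_eq h1 h3 h4 x y]
  exact Summable.tsum_le_of_sum_range_le hsummable (fun n => hple n x y)

end final
end
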